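/- Every real 3×N matrix with unit-norm columns (N ≥ 2) has worst-case coherence μ ≥ 1 − 4/N + 2/N². -/

import Mathlib

set_option maxHeartbeats 1000000

open MeasureTheory
open scoped RealInnerProductSpace ENNReal NNReal

noncomputable abbrev E3 := EuclideanSpace ℝ (Fin 3)


lemma disk_vol (ρ : ℝ) : volume {p : ℝ × ℝ | p.1^2 + p.2^2 ≤ ρ} = ENNReal.ofReal (Real.pi * ρ) := by
  rcases lt_or_ge ρ 0 with hρ | hρ
  · have : {p : ℝ × ℝ | p.1^2 + p.2^2 ≤ ρ} = ∅ := by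
      ext p; simp only [Set.mem_setOf_eq, Set.mem_empty_iff_false, iff_false]
      nlinarith [sq_nonneg p.1, sq_nonneg p.2]
    rw [this, measure_empty, Eq.comm, ENNReal.ofReal_eq_zero]
    nlinarith [Real.pi_pos]
  · have key : Complex.measurableEquivRealProd ⁻¹' {p : ℝ × ℝ | p.1^2 + p.2^2 ≤ ρ}
        = Metric.closedBall (0 : ℂ) (Real.sqrt ρ) := by
      ext z
      simp only [Set.mem_preimage, Complex.measurableEquivRealProd_apply, Set.mem_setOf_eq,
        Metric.mem_closedBall, Complex.dist_eq, sub_zero]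
      rw [Complex.norm_def, Complex.normSq_apply]
      constructor
      · intro h
        have := Real.sqrt_le_sqrt h
        simpa [pow_two] using this
      · intro h
        have h2 : Real.sqrt (z.re * z.re + z.im * z.im) ^ 2 ≤ Real.sqrt ρ ^ 2 := by
          have h0 : (0:ℝ) ≤ Real.sqrt (z.re * z.re + z.im * z.im) := Real.sqrt_nonneg _
          nlinarith [Real.sqrt_nonneg ρ]
        rw [Real.sq_sqrt (by nlinarith [sq_nonneg z.re, sq_nonneg z.im] : (0:ℝ) ≤ z.re * z.re + z.im * z.im),
          Real.sq_sqrt hρ] at h2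
        nlinarith
    rw [← Complex.volume_preserving_equiv_real_prod.measure_preimage
      ((isClosed_le (by continuity) continuous_const).measurableSet).nullMeasurableSet,
      key, Complex.volume_closedBall]
    rw [← ENNReal.ofReal_pow (Real.sqrt_nonneg _), Real.sq_sqrt hρ,
      ← ENNReal.ofReal_coe_nnreal, NNReal.coe_real_pi, ← ENNReal.ofReal_mul hρ, mul_comm]


lemma ball_vol : volume (Metric.closedBall (0:E3) 1) = ENNReal.ofReal (4*Real.pi/3) := by
  rw [EuclideanSpace.volume_closedBall]
  have hg : Real.Gamma ((Fintype.card (Fin 3) : ℝ) / 2 + 1) = 3/4*Real.sqrt Real.pi := by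
    rw [show ((Fintype.card (Fin 3) : ℝ) / 2 + 1) = 3/2 + 1 by norm_num,
      Real.Gamma_add_one (by norm_num), show (3:ℝ)/2 = 1/2 + 1 by norm_num,
      Real.Gamma_add_one (by norm_num), Real.Gamma_one_half_eq]
    ring
  rw [hg, ENNReal.ofReal_one, one_pow, one_mul]
  congr 1
  have h1 : Real.sqrt Real.pi ^ (Fintype.card (Fin 3)) = Real.pi * Real.sqrt Real.pi := by
    rw [show Fintype.card (Fin 3) = 3 by norm_num, pow_succ, pow_two,
      Real.mul_self_sqrt Real.pi_pos.le]
  rw [h1]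
  have h2 : Real.sqrt Real.pi > 0 := Real.sqrt_pos.mpr Real.pi_pos
  field_simp

lemma capTwo (u v w : E3) (hu : ‖u‖ = 1) (hv : ‖v‖ = 1) (hw : ‖w‖ = 1) (c : ℝ)
    (hc : 0 ≤ c) (h1 : c ≤ ⟪w,u⟫) (h2 : c ≤ ⟪w,v⟫) : 2*c^2 - 1 ≤ ⟪u,v⟫ := by
  set a := ⟪w,u⟫ with ha
  set b := ⟪w,v⟫ with hb
  have hww : ⟪w,w⟫ = 1 := by rw [real_inner_self_eq_norm_mul_norm, hw]; norm_num
  have ha1 : a ≤ 1 := by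
    have := real_inner_le_norm w u; rw [hu, hw] at this; simpa using this
  have hb1 : b ≤ 1 := by
    have := real_inner_le_norm w v; rw [hv, hw] at this; simpa using this
  have hcs := real_inner_mul_inner_self_le (u - a • w) (v - b • w)
  have e1 : ⟪u - a • w, v - b • w⟫ = ⟪u,v⟫ - a*b := by
    rw [inner_sub_left, inner_sub_right, inner_sub_right, real_inner_smul_left,
      real_inner_smul_left, real_inner_smul_right, real_inner_smul_right, hww,
      real_inner_comm w u, ← ha, ← hb]
    ring
  have e2 : ⟪u - a • w, u - a • w⟫ = 1 - a^2 := by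
    rw [inner_sub_left, inner_sub_right, inner_sub_right, real_inner_smul_left,
      real_inner_smul_left, real_inner_smul_right, real_inner_smul_right, hww,
      real_inner_comm w u, ← ha, real_inner_self_eq_norm_mul_norm, hu]
    ring
  have e3 : ⟪v - b • w, v - b • w⟫ = 1 - b^2 := by
    rw [inner_sub_left, inner_sub_right, inner_sub_right, real_inner_smul_left,
      real_inner_smul_left, real_inner_smul_right, real_inner_smul_right, hww,
      real_inner_comm w v, ← hb, real_inner_self_eq_norm_mul_norm, hv]
    ring
  rw [e1, e2, e3] at hcs
  set p := ⟪u,v⟫ with hp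
  clear_value p
  clear e1 e2 e3 hww ha hb
  by_contra hcon
  push_neg at hcon
  have hA : (0:ℝ) ≤ 1 - c^2 := by nlinarith
  have hab : c^2 ≤ a*b := by nlinarith
  have h4 : a*b - p > 1 - c^2 := by nlinarith
  have h7 : 1 - a^2 ≤ 1 - c^2 := by nlinarith
  have h8 : (0:ℝ) ≤ 1 - a^2 := by nlinarith
  have h9 : 1 - b^2 ≤ 1 - c^2 := by nlinarith
  have h10 : (0:ℝ) ≤ 1 - b^2 := by nlinarith
  have h6 : (1-a^2)*(1-b^2) ≤ (1-c^2)*(1-c^2) := by nlinarith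
  have h11 : (a*b - p)*(a*b - p) > (1-c^2)*(1-c^2) := by nlinarith
  nlinarith [hcs]

lemma sector_vol_axis (c : ℝ) (hc0 : 0 < c) (hc1 : c < 1) :
    volume {x : E3 | ‖x‖ ≤ 1 ∧ c * ‖x‖ ≤ x 0} = ENNReal.ofReal (2*Real.pi/3*(1-c)) := by
  have hc2 : (0:ℝ) < c^2 := by positivity
  set K : ℝ := (1 - c^2)/c^2 with hK
  have hKnn : 0 ≤ K := div_nonneg (by nlinarith) hc2.le
  have hcK : c^2 * K = 1 - c^2 := by rw [hK]; field_simp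
  set A : Set (ℝ × ℝ × ℝ) := {p | Real.sqrt (p.1^2 + p.2.1^2 + p.2.2^2) ≤ 1 ∧
      c * Real.sqrt (p.1^2 + p.2.1^2 + p.2.2^2) ≤ p.1} with hA
  have hq : Continuous fun p : ℝ × ℝ × ℝ => Real.sqrt (p.1^2 + p.2.1^2 + p.2.2^2) :=
    Real.continuous_sqrt.comp (((continuous_fst.pow 2).add
      ((continuous_fst.comp continuous_snd).pow 2)).add
      ((continuous_snd.comp continuous_snd).pow 2))
  have hAc : IsClosed A := (isClosed_le hq continuous_const).inter
    (isClosed_le (continuous_const.mul hq) continuous_fst)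
  have hAm : MeasurableSet A := hAc.measurableSet
  -- measure preserving chain
  have mp : MeasurePreserving (fun x : E3 => ((x 0 : ℝ), ((x 1 : ℝ), (x 2 : ℝ))))
      volume volume := by
    have m1 := EuclideanSpace.volume_preserving_symm_measurableEquiv_toLp (Fin 3)
    have m2 := MeasureTheory.volume_preserving_piFinSuccAbove (fun _ : Fin 3 => ℝ) 0
    have m3 := (MeasurePreserving.id (volume : Measure ℝ)).prod
      (MeasureTheory.volume_preserving_finTwoArrow ℝ)
    have := (m3.comp m2).comp m1
    convert this using 1
    all_goals rfl
  have hpre : (fun x : E3 => ((x 0 : ℝ), ((x 1 : ℝ), (x 2 : ℝ)))) ⁻¹' A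
      = {x : E3 | ‖x‖ ≤ 1 ∧ c * ‖x‖ ≤ x 0} := by
    ext x
    have hnorm : ‖x‖ = Real.sqrt ((x 0)^2 + (x 1)^2 + (x 2)^2) := by
      rw [EuclideanSpace.norm_eq, Fin.sum_univ_three]
      simp [Real.norm_eq_abs, sq_abs]
    simp only [hA, Set.mem_preimage, Set.mem_setOf_eq, hnorm]
  rw [← hpre, mp.measure_preimage hAm.nullMeasurableSet]
  rw [MeasureTheory.Measure.volume_eq_prod, Measure.prod_apply hAm]
  have slice : ∀ z : ℝ, volume (Prod.mk z ⁻¹' A) = Set.indicator (Set.Icc (0:ℝ) 1)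
      (fun z => ENNReal.ofReal (Real.pi * min (1 - z^2) (K * z^2))) z := by
    intro z
    rcases lt_or_ge z 0 with hz | hz
    · have he : Prod.mk z ⁻¹' A = ∅ := by
        ext w
        simp only [hA, Set.mem_preimage, Set.mem_setOf_eq, Set.mem_empty_iff_false, iff_false,
          not_and]
        intro _ 
        nlinarith [Real.sqrt_nonneg (z^2 + w.1^2 + w.2^2),
          mul_nonneg hc0.le (Real.sqrt_nonneg (z^2 + w.1^2 + w.2^2))]
      rw [he, measure_empty,
        Set.indicator_of_notMem (fun h => absurd h.1 (not_le.mpr hz))]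
    · have hset : Prod.mk z ⁻¹' A = {w : ℝ × ℝ | w.1^2 + w.2^2 ≤ min (1 - z^2) (K * z^2)} := by
        ext w
        simp only [hA, Set.mem_preimage, Set.mem_setOf_eq, le_min_iff]
        have hSnn : (0:ℝ) ≤ z^2 + w.1^2 + w.2^2 := by positivity
        have hsq := Real.sq_sqrt hSnn
        have hsnn := Real.sqrt_nonneg (z^2 + w.1^2 + w.2^2)
        set s := Real.sqrt (z^2 + w.1^2 + w.2^2) with hsdef
        clear_value s
        constructor
        · rintro ⟨h1, h2⟩
          have hS1 : z^2 + w.1^2 + w.2^2 ≤ 1 := by nlinarith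
          have hzS : c^2 * (z^2 + w.1^2 + w.2^2) ≤ z^2 := by
            nlinarith [mul_self_le_mul_self (mul_nonneg hc0.le hsnn) h2]
          refine ⟨by nlinarith, ?_⟩
          rw [hK, div_mul_eq_mul_div, le_div_iff₀ hc2]
          nlinarith
        · rintro ⟨h1, h2⟩
          have hzS : c^2 * (z^2 + w.1^2 + w.2^2) ≤ z^2 := by
            nlinarith [mul_le_mul_of_nonneg_left h2 hc2.le]
          constructor
          · nlinarith [sq_nonneg (s - 1)]
          · nlinarith [hzS, hsq, hz, mul_nonneg hc0.le hsnn]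
      rw [hset, disk_vol]
      rcases le_or_gt z 1 with hz1 | hz1
      · rw [Set.indicator_of_mem (Set.mem_Icc.mpr ⟨hz, hz1⟩)]
      · rw [Set.indicator_of_notMem (fun h => absurd h.2 (not_le.mpr hz1)),
          ENNReal.ofReal_eq_zero]
        have h1 : Real.pi * min (1-z^2) (K*z^2) ≤ Real.pi * (1 - z^2) :=
          mul_le_mul_of_nonneg_left (min_le_left _ _) Real.pi_pos.le
        nlinarith [h1, mul_neg_of_pos_of_neg Real.pi_pos (show (1:ℝ) - z^2 < 0 by nlinarith)]
  rw [lintegral_congr slice, lintegral_indicator measurableSet_Icc _]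
  have hcont : Continuous fun z : ℝ => Real.pi * min (1 - z^2) (K * z^2) :=
    continuous_const.mul ((continuous_const.sub (continuous_pow 2)).min
      (continuous_const.mul (continuous_pow 2)))
  have hnn : 0 ≤ᵐ[volume.restrict (Set.Icc (0:ℝ) 1)]
      fun z => Real.pi * min (1 - z^2) (K * z^2) := by
    refine (ae_restrict_mem measurableSet_Icc).mono fun z hz => ?_
    exact mul_nonneg Real.pi_pos.le (le_min (by nlinarith [hz.1, hz.2])
      (mul_nonneg hKnn (sq_nonneg z)))
  rw [← MeasureTheory.ofReal_integral_eq_lintegral_ofReal (hcont.integrableOn_Icc) hnn]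
  congr 1
  rw [MeasureTheory.integral_Icc_eq_integral_Ioc,
    ← intervalIntegral.integral_of_le (by norm_num : (0:ℝ) ≤ 1)]
  have hi1 : IntervalIntegrable (fun z : ℝ => Real.pi * min (1-z^2) (K*z^2)) volume 0 c :=
    hcont.intervalIntegrable _ _
  have hi2 : IntervalIntegrable (fun z : ℝ => Real.pi * min (1-z^2) (K*z^2)) volume c 1 :=
    hcont.intervalIntegrable _ _
  rw [← intervalIntegral.integral_add_adjacent_intervals hi1 hi2]
  have e1 : ∫ z in (0:ℝ)..c, Real.pi * min (1-z^2) (K*z^2)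
      = ∫ z in (0:ℝ)..c, (Real.pi*K) * z^2 := by
    refine intervalIntegral.integral_congr fun z hz => ?_
    rw [Set.uIcc_of_le hc0.le] at hz
    have hmin : min (1-z^2) (K*z^2) = K*z^2 := min_eq_right (by nlinarith [hz.1, hz.2])
    rw [hmin]; ring
  have e2 : ∫ z in c..(1:ℝ), Real.pi * min (1-z^2) (K*z^2)
      = ∫ z in c..(1:ℝ), Real.pi * (1 - z^2) := by
    refine intervalIntegral.integral_congr fun z hz => ?_
    rw [Set.uIcc_of_le hc1.le] at hz
    have hmin : min (1-z^2) (K*z^2) = 1-z^2 := min_eq_left (by nlinarith [hz.1, hz.2])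
    rw [hmin]
  rw [e1, e2]
  rw [intervalIntegral.integral_const_mul, integral_pow]
  have e3 : ∫ z in c..(1:ℝ), Real.pi * (1 - z^2) = Real.pi * ((1 - c) - (1 - c^3)/3) := by
    rw [intervalIntegral.integral_const_mul]
    rw [intervalIntegral.integral_sub intervalIntegrable_const
      ((continuous_pow 2).intervalIntegrable _ _)]
    rw [integral_pow, intervalIntegral.integral_const]
    norm_num
  rw [e3]
  rw [hK]
  have : c ≠ 0 := hc0.ne'
  field_simp
  ring

lemma sector_vol (c : ℝ) (hc0 : 0 < c) (hc1 : c < 1) (v : E3) (hv : ‖v‖ = 1) :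
    volume {x : E3 | ‖x‖ ≤ 1 ∧ c * ‖x‖ ≤ ⟪v, x⟫} = ENNReal.ofReal (2*Real.pi/3*(1-c)) := by
  set e : E3 := EuclideanSpace.single 0 1 with he
  have hne : ‖e‖ = 1 := by simp [he]
  have hid : ∀ x : E3, ⟪e, x⟫ = x 0 := fun x => by
    simp [he, EuclideanSpace.inner_single_left]
  set f := Submodule.reflection (ℝ ∙ (e - v))ᗮ with hf
  have hfe : f e = v := Submodule.reflection_sub (by rw [hne, hv])
  have mpf : MeasurePreserving f volume volume := f.measurePreserving
  have hSm : MeasurableSet {x : E3 | ‖x‖ ≤ 1 ∧ c * ‖x‖ ≤ ⟪v, x⟫} := by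
    refine ((isClosed_le continuous_norm continuous_const).inter
      (isClosed_le (continuous_const.mul continuous_norm)
        (Continuous.inner continuous_const continuous_id))).measurableSet
  have hpre : ⇑f ⁻¹' {x : E3 | ‖x‖ ≤ 1 ∧ c * ‖x‖ ≤ ⟪v, x⟫}
      = {x : E3 | ‖x‖ ≤ 1 ∧ c * ‖x‖ ≤ x 0} := by
    ext x
    simp only [Set.mem_preimage, Set.mem_setOf_eq, f.norm_map]
    rw [← hfe, LinearIsometryEquiv.inner_map_map, hid]
  rw [← mpf.measure_preimage hSm.nullMeasurableSet, hpre, sector_vol_axis c hc0 hc1]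

/-- Every real `3 × N` matrix with unit-norm columns (`N ≥ 2`) has
worst-case coherence `μ ≥ 1 − 4/N + 2/N²`. -/
theorem stmt_10 (N : ℕ) (hN : 2 ≤ N) (Φ : Matrix (Fin 3) (Fin N) ℝ)
    (hunit : ∀ n : Fin N, ∑ m : Fin 3, Φ m n ^ 2 = 1) :
    ∃ i j : Fin N, i ≠ j ∧
      1 - 4 / (N : ℝ) + 2 / (N : ℝ) ^ 2 ≤ |∑ m : Fin 3, Φ m i * Φ m j| := by
  by_contra hcon
  push_neg at hcon
  set t : ℝ := 1 - 4/(N:ℝ) + 2/(N:ℝ)^2 with ht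
  have hNR : (2:ℝ) ≤ (N:ℝ) := by exact_mod_cast hN
  have hN0 : (0:ℝ) < (N:ℝ) := by linarith
  set φ : Fin N → E3 := fun i => (WithLp.toLp 2 (fun m => Φ m i) : EuclideanSpace ℝ (Fin 3)) with hφ
  have hφn : ∀ i, ‖φ i‖ = 1 := by
    intro i
    rw [EuclideanSpace.norm_eq]
    have h1 : ∑ m : Fin 3, ‖(φ i) m‖^2 = 1 := by
      simpa [hφ, Real.norm_eq_abs, sq_abs] using hunit i
    rw [h1, Real.sqrt_one]
  have hφip : ∀ i j, ⟪φ i, φ j⟫ = ∑ m : Fin 3, Φ m i * Φ m j := by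
    intro i j
    simp [hφ, PiLp.inner_apply, RCLike.inner_apply, conj_trivial]
    exact Finset.sum_congr rfl fun m _ => mul_comm _ _
  have htm1 : (-1:ℝ) < t := by
    have h1 : 4/(N:ℝ) ≤ 2 := by rw [div_le_iff₀ hN0]; linarith
    have h2 : (0:ℝ) < 2/(N:ℝ)^2 := by positivity
    rw [ht]; linarith
  have ht1 : t < 1 := by
    have h1 : 2/(N:ℝ)^2 < 4/(N:ℝ) := by
      rw [div_lt_div_iff₀ (by positivity) hN0]; nlinarith
    rw [ht]; linarith
  set v : Fin N × Bool → E3 := fun p => if p.2 then φ p.1 else -φ p.1 with hv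
  have hvn : ∀ p, ‖v p‖ = 1 := by
    rintro ⟨i, b⟩; cases b <;> simp [hv, hφn, norm_neg]
  have hvlt : ∀ p q, p ≠ q → ⟪v p, v q⟫ < t := by
    rintro ⟨i, b⟩ ⟨j, b'⟩ hpq
    by_cases hij : i = j
    · subst hij
      have hbb : b ≠ b' := fun h => hpq (by rw [h])
      have hself : ⟪φ i, φ i⟫ = 1 := by
        rw [real_inner_self_eq_norm_mul_norm, hφn]; norm_num
      cases b <;> cases b'
      · exact absurd rfl hbb
      · show ⟪-φ i, φ i⟫ < t
        rw [inner_neg_left, hself]; linarith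
      · show ⟪φ i, -φ i⟫ < t
        rw [inner_neg_right, hself]; linarith
      · exact absurd rfl hbb
    · have habs := hcon i j hij
      rw [← hφip i j] at habs
      have h2 := abs_lt.mp habs
      cases b <;> cases b'
      · show ⟪-φ i, -φ j⟫ < t
        rw [inner_neg_neg]; linarith [h2.2]
      · show ⟪-φ i, φ j⟫ < t
        rw [inner_neg_left]; linarith [h2.1]
      · show ⟪φ i, -φ j⟫ < t
        rw [inner_neg_right]; linarith [h2.1]
      · exact h2.2
  -- the max inner product
  have hne : (Finset.univ.offDiag : Finset ((Fin N × Bool) × (Fin N × Bool))).Nonempty :=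
    ⟨((⟨0, by omega⟩, true), (⟨0, by omega⟩, false)), Finset.mem_offDiag.mpr
      ⟨Finset.mem_univ _, Finset.mem_univ _, by simp⟩⟩
  set M : ℝ := Finset.univ.offDiag.sup' hne (fun pq => ⟪v pq.1, v pq.2⟫) with hM
  have hMlt : M < t := by
    rw [hM, Finset.sup'_lt_iff]
    rintro pq hpq
    exact hvlt _ _ (Finset.mem_offDiag.mp hpq).2.2
  have hM0 : 0 ≤ M := by
    have hi01 : ((⟨0, by omega⟩ : Fin N), true) ≠ ((⟨1, by omega⟩ : Fin N), true) := by simp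
    have hi01' : ((⟨0, by omega⟩ : Fin N), true) ≠ ((⟨1, by omega⟩ : Fin N), false) := by simp
    have hmem : (((⟨0, by omega⟩ : Fin N), true), ((⟨1, by omega⟩ : Fin N), true))
        ∈ (Finset.univ.offDiag : Finset ((Fin N × Bool) × (Fin N × Bool))) :=
      Finset.mem_offDiag.mpr ⟨Finset.mem_univ _, Finset.mem_univ _, hi01⟩
    have hmem' : (((⟨0, by omega⟩ : Fin N), true), ((⟨1, by omega⟩ : Fin N), false))
        ∈ (Finset.univ.offDiag : Finset ((Fin N × Bool) × (Fin N × Bool))) :=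
      Finset.mem_offDiag.mpr ⟨Finset.mem_univ _, Finset.mem_univ _, hi01'⟩
    have h1 := Finset.le_sup' (fun pq : (Fin N × Bool) × (Fin N × Bool) => ⟪v pq.1, v pq.2⟫) hmem
    have h2 := Finset.le_sup' (fun pq : (Fin N × Bool) × (Fin N × Bool) => ⟪v pq.1, v pq.2⟫) hmem'
    rw [← hM] at h1 h2
    have e1 : ⟪v (⟨0, by omega⟩, true), v (⟨1, by omega⟩, true)⟫
        = ⟪φ ⟨0, by omega⟩, φ ⟨1, by omega⟩⟫ := rfl
    have e2 : ⟪v (⟨0, by omega⟩, true), v (⟨1, by omega⟩, false)⟫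
        = -⟪φ ⟨0, by omega⟩, φ ⟨1, by omega⟩⟫ := by
      show ⟪φ ⟨0, by omega⟩, -φ ⟨1, by omega⟩⟫ = _
      rw [inner_neg_right]
    rw [e1] at h1
    rw [e2] at h2
    rcases le_total 0 (⟪φ ⟨0, by omega⟩, φ ⟨1, by omega⟩⟫) with h | h
    · linarith
    · linarith
  clear_value t M
  set m' : ℝ := (M + t)/2 with hm'
  clear_value m'
  have hMm' : M < m' := by rw [hm']; linarith [hMlt]
  have hm't : m' < t := by rw [hm']; linarith
  have hm'0 : 0 ≤ m' := le_trans hM0 hMm'.le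
  have hm'1 : m' < 1 := lt_trans hm't ht1
  set c' : ℝ := Real.sqrt ((1+m')/2) with hc'def
  have hc'sq : c'^2 = (1+m')/2 := Real.sq_sqrt (by linarith)
  have hc'0 : 0 < c' := Real.sqrt_pos.mpr (by linarith)
  clear_value c'
  have hc'1 : c' < 1 := by nlinarith [hc'sq, sq_nonneg (c' - 1), hc'0]
  set c : ℝ := 1 - 1/(N:ℝ) with hcdef
  have hct : c^2 = (1+t)/2 := by
    rw [hcdef, ht]; field_simp; ring
  have hc0 : 0 < c := by
    have h1 : 1/(N:ℝ) ≤ 1/2 := by rw [div_le_div_iff₀ hN0 (by norm_num)]; linarith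
    rw [hcdef]; linarith
  clear_value c
  have hcc : c'^2 < c^2 := by rw [hc'sq, hct]; linarith
  have hc'c : c' < c := by nlinarith [hcc, hc'0, hc0]
  set S : Fin N × Bool → Set E3 :=
    fun p => {x : E3 | ‖x‖ ≤ 1 ∧ c' * ‖x‖ ≤ ⟪v p, x⟫} \ {0} with hS
  have hSm : ∀ p, MeasurableSet (S p) := by
    intro p
    refine MeasurableSet.diff ?_ (measurableSet_singleton 0)
    exact ((isClosed_le continuous_norm continuous_const).inter
      (isClosed_le (continuous_const.mul continuous_norm)
        (Continuous.inner continuous_const continuous_id))).measurableSet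
  have hSvol : ∀ p, volume (S p) = ENNReal.ofReal (2*Real.pi/3*(1-c')) := by
    intro p
    rw [hS]
    simp only
    rw [measure_diff_null (measure_singleton 0)]
    exact sector_vol c' hc'0 hc'1 (v p) (hvn p)
  have hdisj : Pairwise (Function.onFun Disjoint S) := by
    intro p q hpq
    have : Disjoint (S p) (S q) := by
      rw [Set.disjoint_left]
      rintro x ⟨⟨hx1, hx2⟩, hx0⟩ ⟨⟨hy1, hy2⟩, -⟩
      have hx0' : x ≠ 0 := by simpa using hx0
      have hxn : (0:ℝ) < ‖x‖ := norm_pos_iff.mpr hx0'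
      have hxne : ‖x‖ ≠ 0 := hxn.ne'
      set w : E3 := (‖x‖⁻¹ : ℝ) • x with hw
      have hwn : ‖w‖ = 1 := norm_smul_inv_norm (𝕜 := ℝ) hx0'
      have hwp : c' ≤ ⟪w, v p⟫ := by
        rw [hw, real_inner_smul_left, real_inner_comm]
        have h3 := mul_le_mul_of_nonneg_left hx2 (inv_nonneg.mpr (norm_nonneg x))
        have heq : ‖x‖⁻¹ * (c' * ‖x‖) = c' := by field_simp
        linarith [h3, heq.symm.le, heq.le]
      have hwq : c' ≤ ⟪w, v q⟫ := by
        rw [hw, real_inner_smul_left, real_inner_comm]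
        have h3 := mul_le_mul_of_nonneg_left hy2 (inv_nonneg.mpr (norm_nonneg x))
        have heq : ‖x‖⁻¹ * (c' * ‖x‖) = c' := by field_simp
        linarith [h3, heq.symm.le, heq.le]
      have hcap := capTwo (v p) (v q) w (hvn p) (hvn q) hwn c' hc'0.le hwp hwq
      have hmem : (p, q) ∈ (Finset.univ.offDiag : Finset ((Fin N × Bool) × (Fin N × Bool))) :=
        Finset.mem_offDiag.mpr ⟨Finset.mem_univ _, Finset.mem_univ _, hpq⟩
      have hleM := Finset.le_sup'
        (fun pq : (Fin N × Bool) × (Fin N × Bool) => ⟪v pq.1, v pq.2⟫) hmem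
      rw [← hM] at hleM
      have h2c : 2*c'^2 - 1 = m' := by rw [hc'sq]; ring
      have : m' ≤ M := by linarith [hcap, hleM]
      linarith [hMm']
    exact this
  have hsub : (⋃ p, S p) ⊆ Metric.closedBall (0:E3) 1 := by
    intro x hx
    rw [Set.mem_iUnion] at hx
    obtain ⟨p, ⟨⟨h1, -⟩, -⟩⟩ := hx
    exact Metric.mem_closedBall.mpr (by rw [dist_zero_right]; exact h1)
  have hle := measure_mono (μ := (volume : Measure E3)) hsub
  rw [measure_iUnion hdisj hSm, ball_vol, tsum_fintype] at hle
  simp only [hSvol] at hle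
  rw [Finset.sum_const, Finset.card_univ] at hle
  have hcard : Fintype.card (Fin N × Bool) = 2*N := by
    simp [Fintype.card_prod]; ring
  rw [hcard, nsmul_eq_mul] at hle
  have hcast : ((2*N : ℕ) : ℝ≥0∞) = ENNReal.ofReal ((2*N : ℕ) : ℝ) :=
    (ENNReal.ofReal_natCast _).symm
  rw [hcast, ← ENNReal.ofReal_mul (by positivity)] at hle
  rw [ENNReal.ofReal_le_ofReal_iff (by positivity)] at hle
  push_cast at hle
  have hrw : 2*(N:ℝ)*(2*Real.pi/3*(1-c')) = (4*Real.pi/3)*((N:ℝ)*(1-c')) := by ring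
  have h5 : (N:ℝ)*(1-c') ≤ 1 := by
    rw [hrw] at hle
    have h6 : (4*Real.pi/3)*((N:ℝ)*(1-c')) ≤ (4*Real.pi/3)*1 := by linarith
    exact le_of_mul_le_mul_left h6 (by positivity)
  have h7 : (N:ℝ)*(1/(N:ℝ)) = 1 := by field_simp
  nlinarith [h5, hc'c, hN0, h7, mul_pos hN0 (sub_pos.mpr hc'c)]
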